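/- For real x, y, t with |x t| + |y| t² < 1, the series Σ_{n=0}^∞ t^n P_n(x,y) converges and equals 1/√(1 + x t + y t²), where P_n(x,y) = ((-1)^n/√π) Σ_{r=0}^{⌊n/2⌋} Γ(n-r+1/2) x^(n-2r) (-y)^r / ((n-2r)! r!). -/

import Mathlib

open Real Finset

lemma cb_conv (n : ℕ) :
    ∑ k ∈ Finset.range (n+1), Nat.centralBinom k * Nat.centralBinom (n-k) = 4 ^ n := by
  induction n with
  | zero => simp [Nat.centralBinom]
  | succ n ih =>
    set c := Nat.centralBinom with hc
    have key : (n+1) * ∑ k ∈ range (n+2), c k * c (n+1-k)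
        = 4 * (n+1) * ∑ k ∈ range (n+1), c k * c (n-k) := by
      have hsplit : (n+1) * ∑ k ∈ range (n+2), c k * c (n+1-k)
          = ∑ k ∈ range (n+2), k * (c k * c (n+1-k)) + ∑ k ∈ range (n+2), (n+1-k) * (c k * c (n+1-k)) := by
        rw [Finset.mul_sum, ← Finset.sum_add_distrib]
        refine Finset.sum_congr rfl fun k hk => ?_
        simp only [mem_range] at hk
        have hkk : k + (n+1-k) = n+1 := by omega
        rw [← add_mul, hkk]
      have hrefl : ∑ k ∈ range (n+2), (n+1-k) * (c k * c (n+1-k)) = ∑ k ∈ range (n+2), k * (c k * c (n+1-k)) := by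
        rw [← Finset.sum_range_reflect (fun k => k * (c k * c (n+1-k))) (n+2)]
        refine Finset.sum_congr rfl fun k hk => ?_
        simp only [mem_range] at hk
        have h1 : n + 2 - 1 - k = n + 1 - k := by omega
        have h2 : n + 1 - (n + 1 - k) = k := by omega
        rw [h1, h2, mul_comm (c (n+1-k)) (c k)]
      have hA : ∑ k ∈ range (n+2), k * (c k * c (n+1-k)) = ∑ j ∈ range (n+1), 2 * (2*j+1) * (c j * c (n-j)) := by
        rw [Finset.sum_range_succ']
        simp only [Nat.zero_mul, zero_mul, add_zero]
        refine Finset.sum_congr rfl fun j hj => ?_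
        have h3 : (j+1) * (c (j+1) * c (n+1-(j+1))) = ((j+1) * c (j+1)) * c (n-j) := by
          rw [show n+1-(j+1) = n - j by omega]; ring
        rw [h3, hc, Nat.succ_mul_centralBinom_succ]; ring
      have hT : 2 * ∑ j ∈ range (n+1), j * (c j * c (n-j)) = n * ∑ j ∈ range (n+1), c j * c (n-j) := by
        have hrefl2 : ∑ j ∈ range (n+1), (n-j) * (c j * c (n-j)) = ∑ j ∈ range (n+1), j * (c j * c (n-j)) := by
          rw [← Finset.sum_range_reflect (fun j => j * (c j * c (n-j))) (n+1)]
          refine Finset.sum_congr rfl fun j hj => ?_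
          simp only [mem_range] at hj
          have h1 : n + 1 - 1 - j = n - j := by omega
          have h2 : n - (n - j) = j := by omega
          rw [h1, h2, mul_comm (c (n-j)) (c j)]
        calc 2 * ∑ j ∈ range (n+1), j * (c j * c (n-j))
            = ∑ j ∈ range (n+1), j * (c j * c (n-j)) + ∑ j ∈ range (n+1), (n-j) * (c j * c (n-j)) := by rw [hrefl2]; ring
          _ = ∑ j ∈ range (n+1), (j + (n-j)) * (c j * c (n-j)) := by
              rw [← Finset.sum_add_distrib]; exact Finset.sum_congr rfl fun j hj => by ring
          _ = n * ∑ j ∈ range (n+1), c j * c (n-j) := by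
              rw [Finset.mul_sum]; refine Finset.sum_congr rfl fun j hj => ?_
              simp only [mem_range] at hj; rw [show j + (n-j) = n by omega]
      calc (n+1) * ∑ k ∈ range (n+2), c k * c (n+1-k)
          = 2 * ∑ k ∈ range (n+2), k * (c k * c (n+1-k)) := by rw [hsplit, hrefl]; ring
        _ = 2 * ∑ j ∈ range (n+1), 2*(2*j+1) * (c j * c (n-j)) := by rw [hA]
        _ = 8 * ∑ j ∈ range (n+1), j * (c j * c (n-j)) + 4 * ∑ j ∈ range (n+1), c j * c (n-j) := by
            rw [Finset.mul_sum, Finset.mul_sum, Finset.mul_sum, ← Finset.sum_add_distrib]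
            exact Finset.sum_congr rfl fun j hj => by ring
        _ = 4 * n * ∑ j ∈ range (n+1), c j * c (n-j) + 4 * ∑ j ∈ range (n+1), c j * c (n-j) := by
            rw [show (8:ℕ) * ∑ j ∈ range (n+1), j * (c j * c (n-j)) = 4 * (2 * ∑ j ∈ range (n+1), j * (c j * c (n-j))) by ring, hT]; ring
        _ = 4 * (n+1) * ∑ k ∈ range (n+1), c k * c (n-k) := by ring
    have h4 : ∑ k ∈ range (n+2), c k * c (n+1-k) = 4 * ∑ k ∈ range (n+1), c k * c (n-k) :=
      Nat.eq_of_mul_eq_mul_left (show 0 < n+1 by omega) (key.trans (by ring))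
    rw [h4, ih]; ring


noncomputable def cb (n : ℕ) : ℝ := n.centralBinom / 4 ^ n

lemma cb_pos (n : ℕ) : 0 < cb n :=
  div_pos (by exact_mod_cast n.centralBinom_pos) (by positivity)

lemma cb_zero : cb 0 = 1 := by simp [cb, Nat.centralBinom]

lemma cb_succ (n : ℕ) : ((n : ℝ) + 1) * cb (n+1) = (2 * (2*n+1) : ℝ) / 4 * cb n := by
  have h := Nat.succ_mul_centralBinom_succ n
  have h' : ((n+1) * Nat.centralBinom (n+1) : ℝ) = (2 * (2*n+1) * Nat.centralBinom n : ℝ) := by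
    exact_mod_cast congrArg (Nat.cast (R := ℝ)) h
  simp only [cb]
  rw [pow_succ]
  push_cast at h' ⊢
  field_simp
  linear_combination h'

lemma cb_succ_le (n : ℕ) : cb (n+1) ≤ cb n := by
  have h := cb_succ n
  have hn : (0:ℝ) < (n:ℝ) + 1 := by positivity
  have hcb := (cb_pos n).le
  rw [div_mul_eq_mul_div, ← sub_nonneg] at *
  nlinarith [cb_pos (n+1), cb_pos n]

lemma cb_le_one (n : ℕ) : cb n ≤ 1 := by
  induction n with
  | zero => simp [cb_zero]
  | succ n ih => exact (cb_succ_le n).trans ih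

lemma cb_norm_summable {v : ℝ} (hv : |v| < 1) : Summable fun n => ‖cb n * v ^ n‖ := by
  refine Summable.of_nonneg_of_le (fun n => norm_nonneg _) (fun n => ?_)
    (summable_geometric_of_lt_one (abs_nonneg v) hv)
  rw [Real.norm_eq_abs, abs_mul, abs_pow, abs_of_pos (cb_pos n)]
  exact mul_le_of_le_one_left (by positivity) (cb_le_one n)

lemma cb_summable {v : ℝ} (hv : |v| < 1) : Summable fun n => cb n * v ^ n :=
  (cb_norm_summable hv).of_norm

lemma cb_conv_real (n : ℕ) : ∑ k ∈ Finset.range (n+1), cb k * cb (n-k) = 1 := by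
  have h := cb_conv n
  have : (∑ k ∈ Finset.range (n+1), Nat.centralBinom k * Nat.centralBinom (n-k) : ℝ) = 4 ^ n := by
    exact_mod_cast congrArg (Nat.cast (R := ℝ)) h
  push_cast at this
  calc ∑ k ∈ Finset.range (n+1), cb k * cb (n-k)
      = ∑ k ∈ Finset.range (n+1), ((Nat.centralBinom k : ℝ) * Nat.centralBinom (n-k)) / 4^n := by
        refine Finset.sum_congr rfl fun k hk => ?_
        simp only [Finset.mem_range, Nat.lt_succ_iff] at hk
        rw [cb, cb, div_mul_div_comm, ← pow_add, show k + (n - k) = n by omega]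
    _ = (∑ k ∈ Finset.range (n+1), (Nat.centralBinom k : ℝ) * Nat.centralBinom (n-k)) / 4^n := by
        rw [Finset.sum_div]
    _ = (4:ℝ)^n / 4^n := by rw [this]
    _ = 1 := div_self (by positivity)

lemma cb_hasSum {v : ℝ} (hv : |v| < 1) :
    HasSum (fun n => cb n * v ^ n) (1 / Real.sqrt (1 - v)) := by
  have hs := cb_summable hv
  set F := ∑' n, cb n * v ^ n with hF
  have h1v : 0 < 1 - v := by cases abs_lt.1 hv; linarith
  have hFsq : F * F = (1 - v)⁻¹ := by
    rw [hF, tsum_mul_tsum_eq_tsum_sum_range_of_summable_norm (cb_norm_summable hv)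
      (cb_norm_summable hv)]
    have : ∀ n : ℕ, ∑ k ∈ Finset.range (n+1), (cb k * v ^ k) * (cb (n-k) * v ^ (n-k)) = v ^ n := by
      intro n
      have : ∀ k ∈ Finset.range (n+1), (cb k * v ^ k) * (cb (n-k) * v ^ (n-k))
          = (cb k * cb (n-k)) * v ^ n := by
        intro k hk
        simp only [Finset.mem_range, Nat.lt_succ_iff] at hk
        rw [show v ^ n = v ^ k * v ^ (n-k) by rw [← pow_add, show k + (n-k) = n by omega]]
        ring
      rw [Finset.sum_congr rfl this, ← Finset.sum_mul, cb_conv_real, one_mul]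
    rw [tsum_congr this, tsum_geometric_of_norm_lt_one (by rwa [Real.norm_eq_abs])]
  -- positivity of F
  have hterm : ∀ k : ℕ, cb (2*k) * |v|^(2*k) * (1 - |v|) ≤ cb (2*k) * v^(2*k) + cb (2*k+1) * v^(2*k+1) := by
    intro k
    have he : v ^ (2*k) = |v| ^ (2*k) := by rw [pow_mul, pow_mul, sq_abs]
    have h2 : -(cb (2*k) * (|v|^(2*k) * |v|)) ≤ cb (2*k+1) * v^(2*k+1) := by
      have := neg_abs_le (cb (2*k+1) * v^(2*k+1))
      have habs : |cb (2*k+1) * v^(2*k+1)| = cb (2*k+1) * |v|^(2*k+1) := by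
        rw [abs_mul, abs_pow, abs_of_pos (cb_pos _)]
      have hle : cb (2*k+1) * |v|^(2*k+1) ≤ cb (2*k) * (|v|^(2*k) * |v|) := by
        rw [pow_succ]
        exact mul_le_mul_of_nonneg_right (cb_succ_le _) (by positivity)
      linarith [habs ▸ this]
    nlinarith [cb_pos (2*k), pow_nonneg (abs_nonneg v) (2*k)]
  have hpair : ∀ m : ℕ, ∑ n ∈ Finset.range (2*m), cb n * v^n
      = ∑ k ∈ Finset.range m, (cb (2*k) * v^(2*k) + cb (2*k+1) * v^(2*k+1)) := by
    intro m
    induction m with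
    | zero => simp
    | succ m ih =>
      rw [show 2*(m+1) = 2*m+1+1 by ring, Finset.sum_range_succ, Finset.sum_range_succ,
        Finset.sum_range_succ, ih]
      ring
  have hFbig : 1 - |v| ≤ F := by
    have h2m : Filter.Tendsto (fun m : ℕ => 2*m) Filter.atTop Filter.atTop :=
      Filter.tendsto_atTop_atTop.2 fun b => ⟨b, fun a ha => by omega⟩
    have htend : Filter.Tendsto (fun m => ∑ n ∈ Finset.range (2*m), cb n * v^n)
        Filter.atTop (nhds F) := hs.hasSum.tendsto_sum_nat.comp h2m
    refine ge_of_tendsto htend (Filter.eventually_atTop.2 ⟨1, fun m hm => ?_⟩)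
    rw [hpair m]
    calc 1 - |v| = cb 0 * |v|^0 * (1 - |v|) := by simp [cb_zero]
      _ ≤ cb (2*0) * v^(2*0) + cb (2*0+1) * v^(2*0+1) := by simpa using hterm 0
      _ ≤ ∑ k ∈ Finset.range m, (cb (2*k) * v^(2*k) + cb (2*k+1) * v^(2*k+1)) := by
          refine Finset.single_le_sum (f := fun k => cb (2*k) * v^(2*k) + cb (2*k+1) * v^(2*k+1)) (fun k _ => ?_) (Finset.mem_range.2 hm)
          calc (0:ℝ) ≤ cb (2*k) * |v|^(2*k) * (1 - |v|) := mul_nonneg (mul_nonneg (cb_pos _).le (by positivity)) (by linarith)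
            _ ≤ _ := hterm k
  have hFpos : 0 < F := lt_of_lt_of_le (by linarith) hFbig
  have hFeq : F = 1 / Real.sqrt (1 - v) := by
    rw [← Real.sqrt_sq hFpos.le, sq, hFsq, Real.sqrt_inv, one_div]
  exact hFeq ▸ hs.hasSum



noncomputable def legendre2 (n : ℕ) (x y : ℝ) : ℝ :=
  ((-1 : ℝ) ^ n / Real.sqrt Real.pi) *
    ∑ r ∈ Finset.range (n / 2 + 1),
      Real.Gamma ((n : ℝ) - r + 1 / 2) * x ^ (n - 2 * r) * (-y) ^ r /
        ((Nat.factorial (n - 2 * r) : ℝ) * (Nat.factorial r : ℝ))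

lemma Gamma_nat_add_half (m : ℕ) :
    Real.Gamma ((m : ℝ) + 1/2) = Real.sqrt Real.pi * (2*m).factorial / (4^m * m.factorial) := by
  induction m with
  | zero =>
    rw [show ((0:ℕ):ℝ) + 1/2 = 1/2 by norm_num, Real.Gamma_one_half_eq]
    simp
  | succ m ih =>
    have hne : ((m:ℝ) + 1/2) ≠ 0 := by positivity
    have harg : ((m+1 : ℕ):ℝ) + 1/2 = ((m:ℝ)+1/2) + 1 := by push_cast; ring
    rw [harg, Real.Gamma_add_one hne, ih]
    have hfac : ((2*(m+1)).factorial : ℝ) = (2*m+2) * ((2*m+1) * (2*m).factorial) := by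
      rw [show 2*(m+1) = 2*m+1+1 by ring, Nat.factorial_succ, Nat.factorial_succ]
      push_cast; ring
    have hfac2 : ((m+1).factorial : ℝ) = (m+1) * m.factorial := by
      rw [Nat.factorial_succ]; push_cast; ring
    rw [hfac, hfac2]
    have h1 : (m.factorial : ℝ) ≠ 0 := Nat.cast_ne_zero.2 m.factorial_ne_zero
    have h2 : (4:ℝ)^m ≠ 0 := by positivity
    field_simp
    ring

noncomputable def Gfun (x y t : ℝ) (p : ℕ × ℕ) : ℝ :=
  cb (p.1 + p.2) * ((p.1 + p.2).choose p.2 : ℝ) * (-(x*t))^p.1 * (-(y*t^2))^p.2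

def e2equiv : (Σ n : ℕ, {r : ℕ // r ∈ Finset.range (n / 2 + 1)}) ≃ ℕ × ℕ where
  toFun p := (p.1 - 2 * p.2.1, p.2.1)
  invFun q := ⟨q.1 + 2 * q.2, ⟨q.2, Finset.mem_range.2 (by omega)⟩⟩
  left_inv := by
    rintro ⟨n, r, hr⟩
    simp only [Finset.mem_range, Nat.lt_succ_iff] at hr
    exact Sigma.subtype_ext (show n - 2*r + 2*r = n by omega) rfl
  right_inv := by rintro ⟨s, r⟩; simp

lemma term_eq (x y t : ℝ) (s r : ℕ) :
    Gfun x y t (s, r) = t^(s+2*r) * (((-1 : ℝ) ^ (s+2*r) / Real.sqrt Real.pi) *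
      (Real.Gamma (((s+2*r : ℕ) : ℝ) - r + 1/2) * x ^ s * (-y) ^ r /
        ((Nat.factorial s : ℝ) * (Nat.factorial r : ℝ)))) := by
  have hgarg : (((s+2*r : ℕ) : ℝ)) - r + 1/2 = ((s+r : ℕ) : ℝ) + 1/2 := by push_cast; ring
  rw [hgarg, _root_.Gamma_nat_add_half]
  simp only [Gfun]
  have hcb : cb (s+r) = ((2*(s+r)).factorial : ℝ) / (((s+r).factorial : ℝ) * ((s+r).factorial : ℝ)) / 4^(s+r) := by
    rw [cb, Nat.centralBinom, Nat.cast_choose ℝ (by omega : s+r ≤ 2*(s+r))]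
    rw [show 2*(s+r) - (s+r) = s+r by omega]
  have hch : (((s+r).choose r : ℕ) : ℝ) = ((s+r).factorial : ℝ) / ((r.factorial : ℝ) * (s.factorial : ℝ)) := by
    rw [Nat.cast_choose ℝ (by omega : r ≤ s+r), show s+r-r = s by omega]
  rw [hcb, hch]
  have e1 : (-(x*t))^s = (-1:ℝ)^s * (x^s * t^s) := by
    rw [← neg_one_mul, mul_pow, mul_pow]
  have e2 : (-(y*t^2))^r = (-1:ℝ)^r * (y^r * (t^2)^r) := by
    rw [← neg_one_mul, mul_pow, mul_pow]
  have e3 : (-y)^r = (-1:ℝ)^r * y^r := by rw [← neg_one_mul, mul_pow]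
  have e4 : (t:ℝ)^(s+2*r) = t^s * (t^2)^r := by rw [pow_add, pow_mul]
  have e5 : (-1:ℝ)^(s+2*r) = (-1)^s := by
    rw [pow_add, pow_mul, neg_one_sq, one_pow, mul_one]
  rw [e1, e2, e3, e4, e5]
  have h1 : (s.factorial : ℝ) ≠ 0 := Nat.cast_ne_zero.2 s.factorial_ne_zero
  have h2 : (r.factorial : ℝ) ≠ 0 := Nat.cast_ne_zero.2 r.factorial_ne_zero
  have h3 : ((s+r).factorial : ℝ) ≠ 0 := Nat.cast_ne_zero.2 (s+r).factorial_ne_zero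
  have h4 : (4:ℝ)^(s+r) ≠ 0 := by positivity
  have h5 : Real.sqrt Real.pi ≠ 0 := by positivity
  have h6 : (Real.pi) ≠ 0 := Real.pi_ne_zero
  rw [Real.sqrt_ne_zero'] at h5
  field_simp

lemma sum_fiber_eq (x y t : ℝ) (n : ℕ) :
    ∑ r ∈ Finset.range (n/2+1), Gfun x y t (n - 2*r, r) = t^n * legendre2 n x y := by
  rw [legendre2, ← mul_assoc, mul_comm (t^n), mul_assoc, Finset.mul_sum, Finset.mul_sum]
  refine Finset.sum_congr rfl fun r hr => ?_
  simp only [Finset.mem_range, Nat.lt_succ_iff] at hr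
  have h2r : 2*r ≤ n := by omega
  obtain ⟨s, rfl⟩ : ∃ s, n = s + 2*r := ⟨n - 2*r, by omega⟩
  rw [show s + 2*r - 2*r = s by omega]
  rw [term_eq]
  ring

lemma absfib (x y t : ℝ) (k : ℕ) :
    ∑ p ∈ Finset.HasAntidiagonal.antidiagonal k, |Gfun x y t p| = cb k * (|x*t| + |y| * t^2) ^ k := by
  rw [Finset.Nat.sum_antidiagonal_eq_sum_range_succ_mk, add_pow, Finset.mul_sum]
  refine Finset.sum_congr rfl fun i hi => ?_
  simp only [Finset.mem_range, Nat.lt_succ_iff] at hi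
  simp only [Gfun]
  rw [show i + (k - i) = k by omega, Nat.choose_symm hi]
  rw [abs_mul, abs_mul, abs_mul, abs_pow, abs_pow, abs_neg, abs_neg,
    abs_of_pos (cb_pos k), Nat.abs_cast, abs_mul y (t^2), abs_of_nonneg (sq_nonneg t)]
  ring

lemma fib (x y t : ℝ) (k : ℕ) :
    ∑ p ∈ Finset.HasAntidiagonal.antidiagonal k, Gfun x y t p = cb k * (-(x*t) + -(y*t^2)) ^ k := by
  rw [Finset.Nat.sum_antidiagonal_eq_sum_range_succ_mk, add_pow, Finset.mul_sum]
  refine Finset.sum_congr rfl fun i hi => ?_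
  simp only [Finset.mem_range, Nat.lt_succ_iff] at hi
  simp only [Gfun]
  rw [show i + (k - i) = k by omega, Nat.choose_symm hi]
  ring

set_option maxHeartbeats 2000000 in
theorem legendre2_genfun (x y t : ℝ) (h : |x * t| + |y| * t ^ 2 < 1) :
    HasSum (fun n : ℕ => t ^ n * legendre2 n x y)
      (1 / Real.sqrt (1 + x * t + y * t ^ 2)) := by
  set u : ℝ := -(x*t) + -(y*t^2) with hu
  have ht2 : |y * t^2| = |y| * t^2 := by rw [abs_mul, abs_of_nonneg (sq_nonneg t)]
  have hau : |u| < 1 := by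
    have h1 : |u| ≤ |x*t| + |y*t^2| := by
      calc |u| = |(-(x*t)) + (-(y*t^2))| := rfl
        _ ≤ |(-(x*t))| + |(-(y*t^2))| := abs_add_le _ _
        _ = |x*t| + |y*t^2| := by rw [abs_neg, abs_neg]
    rw [ht2] at h1; linarith
  have h1u : 1 - u = 1 + x*t + y*t^2 := by rw [hu]; ring
  have hA : HasSum (fun k => cb k * u ^ k) (1 / Real.sqrt (1 + x*t + y*t^2)) := by
    have := cb_hasSum hau; rwa [h1u] at this
  set w : ℝ := |x*t| + |y| * t^2 with hw
  have hw0 : 0 ≤ w := by positivity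
  have hww : |w| < 1 := by rw [abs_of_nonneg hw0]; exact h
  set e1 : (Σ n : ℕ, {p : ℕ × ℕ // p ∈ Finset.HasAntidiagonal.antidiagonal n}) ≃ ℕ × ℕ :=
    Finset.HasAntidiagonal.sigmaAntidiagonalEquivProd with he1
  have he1app : ∀ p : (Σ n : ℕ, {p : ℕ × ℕ // p ∈ Finset.HasAntidiagonal.antidiagonal n}), e1 p = p.2.1 := by
    rintro ⟨n, p, hp⟩; rfl
  -- summability of |G|
  have hGabs : Summable fun p : ℕ × ℕ => |Gfun x y t p| := by
    refine e1.summable_iff.1 ?_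
    refine (summable_sigma_of_nonneg (fun _ => abs_nonneg _)).2 ⟨fun k => Summable.of_finite, ?_⟩
    have hts : ∀ k : ℕ, ∑' (p : {p : ℕ × ℕ // p ∈ Finset.HasAntidiagonal.antidiagonal k}), |Gfun x y t (e1 ⟨k, p⟩)|
        = cb k * w ^ k := by
      intro k
      rw [tsum_fintype]
      calc ∑ p : {p : ℕ × ℕ // p ∈ Finset.HasAntidiagonal.antidiagonal k}, |Gfun x y t (e1 ⟨k, p⟩)|
          = ∑ p ∈ Finset.HasAntidiagonal.antidiagonal k, |Gfun x y t p| := by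
            rw [← Finset.sum_coe_sort (Finset.HasAntidiagonal.antidiagonal k) (fun p => |Gfun x y t p|)]
            exact Finset.sum_congr rfl fun p _ => by rw [he1app]
        _ = cb k * w ^ k := absfib x y t k
    simpa only [hts] using cb_summable hww
  have hG : Summable (Gfun x y t) :=
    Summable.of_norm (by simpa only [Real.norm_eq_abs] using hGabs)
  -- grouping 1
  have hG1 : HasSum (Gfun x y t) (1 / Real.sqrt (1 + x*t + y*t^2)) := by
    have h0 : HasSum (Gfun x y t) (∑' p, Gfun x y t p) := hG.hasSum
    have h1 : HasSum (fun p : (Σ n : ℕ, {p : ℕ × ℕ // p ∈ Finset.HasAntidiagonal.antidiagonal n}) =>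
        Gfun x y t (e1 p)) (∑' p, Gfun x y t p) := (Equiv.hasSum_iff e1).2 h0
    have h2 : HasSum (fun k => cb k * u ^ k) (∑' p, Gfun x y t p) := by
      refine h1.sigma fun k => ?_
      have h3 := hasSum_fintype (fun p : {p : ℕ × ℕ // p ∈ Finset.HasAntidiagonal.antidiagonal k} =>
        Gfun x y t (e1 ⟨k, p⟩))
      have h4 : ∑ p : {p : ℕ × ℕ // p ∈ Finset.HasAntidiagonal.antidiagonal k}, Gfun x y t (e1 ⟨k, p⟩)
          = cb k * u ^ k := by
        calc ∑ p : {p : ℕ × ℕ // p ∈ Finset.HasAntidiagonal.antidiagonal k}, Gfun x y t (e1 ⟨k, p⟩)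
            = ∑ p ∈ Finset.HasAntidiagonal.antidiagonal k, Gfun x y t p := by
              rw [← Finset.sum_coe_sort (Finset.HasAntidiagonal.antidiagonal k) (fun p => Gfun x y t p)]
              exact Finset.sum_congr rfl fun p _ => by rw [he1app]
          _ = cb k * u ^ k := fib x y t k
      rwa [h4] at h3
    rwa [h2.unique hA] at h0
  -- grouping 2
  have h5 : HasSum (fun p : (Σ n : ℕ, {r : ℕ // r ∈ Finset.range (n/2+1)}) =>
      Gfun x y t (e2equiv p)) (1 / Real.sqrt (1 + x*t + y*t^2)) := (Equiv.hasSum_iff e2equiv).2 hG1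
  have h6 : HasSum (fun n : ℕ => t ^ n * legendre2 n x y) (1 / Real.sqrt (1 + x*t + y*t^2)) := by
    refine h5.sigma fun n => ?_
    have h7 := hasSum_fintype (fun r : {r : ℕ // r ∈ Finset.range (n/2+1)} =>
      Gfun x y t (e2equiv ⟨n, r⟩))
    have h8 : ∑ r : {r : ℕ // r ∈ Finset.range (n/2+1)}, Gfun x y t (e2equiv ⟨n, r⟩)
        = t ^ n * legendre2 n x y := by
      calc ∑ r : {r : ℕ // r ∈ Finset.range (n/2+1)}, Gfun x y t (e2equiv ⟨n, r⟩)
          = ∑ r ∈ Finset.range (n/2+1), Gfun x y t (n - 2*r, r) := by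
            rw [← Finset.sum_coe_sort (Finset.range (n/2+1)) (fun r => Gfun x y t (n - 2*r, r))]
            rfl
        _ = t ^ n * legendre2 n x y := sum_fiber_eq x y t n
    rwa [h8] at h7
  exact h6
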